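/- Let ω, K be real constants and let θ_1, θ_2, θ_3, θ_4 : ℝ → ℝ satisfy the identical Kuramoto model for N = 4: θ_j'(t) = ω + (K/4)·∑_{k=1}^4 sin(θ_k(t) − θ_j(t)). Define Δ_1 = θ_1 − θ_2, Δ_2 = θ_4 − θ_3, Δ_3 = θ_1 − θ_3, Δ_4 = θ_2 − θ_4, Δ_5 = θ_1 − θ_4, Δ_6 = θ_3 − θ_2, and ψ(t) = sin²(Δ_1(t)/2)·sin²(Δ_2(t)/2) / (sin((Δ_1(t)−Δ_2(t))/2)·sin((Δ_3(t)−Δ_4(t))/2)·sin((Δ_5(t)−Δ_6(t))/2)). Then at every time t at which sin((Δ_1−Δ_2)/2), sin((Δ_3−Δ_4)/2), and sin((Δ_5−Δ_6)/2) are all nonzero, ψ is differentiable at t and ψ'(t) = −K·ψ(t). -/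

import Mathlib

/-- For the identical Kuramoto model with `N = 4`, the observable
`ψ = sin²(Δ₁/2)·sin²(Δ₂/2)/(sin((Δ₁−Δ₂)/2)·sin((Δ₃−Δ₄)/2)·sin((Δ₅−Δ₆)/2))`
(with `Δ₁ = θ₁−θ₂`, `Δ₂ = θ₄−θ₃`, `Δ₃ = θ₁−θ₃`, `Δ₄ = θ₂−θ₄`, `Δ₅ = θ₁−θ₄`,
`Δ₆ = θ₃−θ₂`) is a Koopman eigenfunction with eigenvalue `−K`: at every time at
which the three denominator factors are nonzero, `ψ' = −K·ψ`. -/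
theorem koopman_eigenfunction_N4
    (ω K : ℝ) (θ1 θ2 θ3 θ4 : ℝ → ℝ)
    (h1 : ∀ t : ℝ, HasDerivAt θ1 (ω + K / 4 *
      (Real.sin (θ1 t - θ1 t) + Real.sin (θ2 t - θ1 t)
        + Real.sin (θ3 t - θ1 t) + Real.sin (θ4 t - θ1 t))) t)
    (h2 : ∀ t : ℝ, HasDerivAt θ2 (ω + K / 4 *
      (Real.sin (θ1 t - θ2 t) + Real.sin (θ2 t - θ2 t)
        + Real.sin (θ3 t - θ2 t) + Real.sin (θ4 t - θ2 t))) t)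
    (h3 : ∀ t : ℝ, HasDerivAt θ3 (ω + K / 4 *
      (Real.sin (θ1 t - θ3 t) + Real.sin (θ2 t - θ3 t)
        + Real.sin (θ3 t - θ3 t) + Real.sin (θ4 t - θ3 t))) t)
    (h4 : ∀ t : ℝ, HasDerivAt θ4 (ω + K / 4 *
      (Real.sin (θ1 t - θ4 t) + Real.sin (θ2 t - θ4 t)
        + Real.sin (θ3 t - θ4 t) + Real.sin (θ4 t - θ4 t))) t)
    (Δ1 Δ2 Δ3 Δ4 Δ5 Δ6 : ℝ → ℝ)
    (hΔ1 : ∀ t, Δ1 t = θ1 t - θ2 t)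
    (hΔ2 : ∀ t, Δ2 t = θ4 t - θ3 t)
    (hΔ3 : ∀ t, Δ3 t = θ1 t - θ3 t)
    (hΔ4 : ∀ t, Δ4 t = θ2 t - θ4 t)
    (hΔ5 : ∀ t, Δ5 t = θ1 t - θ4 t)
    (hΔ6 : ∀ t, Δ6 t = θ3 t - θ2 t)
    (ψ : ℝ → ℝ)
    (hψ : ∀ t, ψ t = Real.sin (Δ1 t / 2) ^ 2 * Real.sin (Δ2 t / 2) ^ 2
      / (Real.sin ((Δ1 t - Δ2 t) / 2) * Real.sin ((Δ3 t - Δ4 t) / 2)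
          * Real.sin ((Δ5 t - Δ6 t) / 2))) :
    ∀ t : ℝ,
      Real.sin ((Δ1 t - Δ2 t) / 2) ≠ 0 →
      Real.sin ((Δ3 t - Δ4 t) / 2) ≠ 0 →
      Real.sin ((Δ5 t - Δ6 t) / 2) ≠ 0 →
      HasDerivAt ψ (-K * ψ t) t := by
  intro t hA hB hC
  rw [hΔ1, hΔ2] at hA
  rw [hΔ3, hΔ4] at hB
  rw [hΔ5, hΔ6] at hC
  have hψeq : ψ = fun s => Real.sin ((θ1 s - θ2 s) / 2) ^ 2 * Real.sin ((θ4 s - θ3 s) / 2) ^ 2 /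
      (Real.sin ((θ1 s - θ2 s - (θ4 s - θ3 s)) / 2) *
        Real.sin ((θ1 s - θ3 s - (θ2 s - θ4 s)) / 2) *
        Real.sin ((θ1 s - θ4 s - (θ3 s - θ2 s)) / 2)) := by
    funext s
    rw [hψ, hΔ1, hΔ2, hΔ3, hΔ4, hΔ5, hΔ6]
  have hF := ((((h1 t).sub (h2 t)).div_const 2).sin.pow 2).mul
    ((((h4 t).sub (h3 t)).div_const 2).sin.pow 2)
  have hg1 := ((((h1 t).sub (h2 t)).sub ((h4 t).sub (h3 t))).div_const 2).sin
  have hg2 := ((((h1 t).sub (h3 t)).sub ((h2 t).sub (h4 t))).div_const 2).sin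
  have hg3 := ((((h1 t).sub (h4 t)).sub ((h3 t).sub (h2 t))).div_const 2).sin
  have hG := (hg1.mul hg2).mul hg3
  have hG0 : Real.sin ((θ1 t - θ2 t - (θ4 t - θ3 t)) / 2) *
      Real.sin ((θ1 t - θ3 t - (θ2 t - θ4 t)) / 2) *
      Real.sin ((θ1 t - θ4 t - (θ3 t - θ2 t)) / 2) ≠ 0 :=
    mul_ne_zero (mul_ne_zero hA hB) hC
  have hdiv := hF.div hG hG0
  rw [hψeq]
  convert hdiv using 1
  case e'_4 => rfl
  case e'_5 => rfl
  case e'_8 => rfl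
  beta_reduce
  simp only [Pi.mul_apply, Pi.pow_apply, Pi.sub_apply]
  rw [← mul_div_assoc, div_eq_div_iff hG0 (pow_ne_zero 2 hG0)]
  set A := θ1 t with hA1
  set B := θ2 t with hB1
  set C := θ3 t with hC1
  set D := θ4 t with hD1
  set x := (A - B) / 2 with hx
  set y := (D - C) / 2 with hy
  set z := (A + B - C - D) / 2 with hz
  rw [show (A - B - (D - C)) / 2 = x - y by rw [hx, hy]; ring,
      show (A - C - (B - D)) / 2 = x + y by rw [hx, hy]; ring,
      show (A - D - (C - B)) / 2 = z by rw [hz]; ring,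
      show A - B = x + x by rw [hx]; ring,
      show B - A = -x - x by rw [hx]; ring,
      show A - C = x + y + z by rw [hx, hy, hz]; ring,
      show C - A = -x - y - z by rw [hx, hy, hz]; ring,
      show A - D = x - y + z by rw [hx, hy, hz]; ring,
      show D - A = -x + y - z by rw [hx, hy, hz]; ring,
      show B - C = -x + y + z by rw [hx, hy, hz]; ring,
      show C - B = x - y - z by rw [hx, hy, hz]; ring,
      show B - D = -x - y + z by rw [hx, hy, hz]; ring,
      show D - B = x + y - z by rw [hx, hy, hz]; ring,
      show C - D = -y - y by rw [hy]; ring,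
      show D - C = y + y by rw [hy]; ring]
  simp only [sub_self, Real.sin_zero, Real.sin_add, Real.cos_add, Real.sin_sub, Real.cos_sub,
    Real.sin_neg, Real.cos_neg]
  linear_combination
    ((1) * Real.sin x ^ 2 * Real.cos x ^ 4 * Real.sin y ^ 6 * Real.sin z ^ 2 * K
      + (1) * Real.sin x ^ 4 * Real.sin y ^ 4 * Real.cos y ^ 2 * Real.sin z ^ 2 * K
      + (-1) * Real.sin x ^ 4 * Real.sin y ^ 4 * Real.cos y ^ 4 * Real.sin z ^ 2 * K
      + (-1) * Real.sin x ^ 4 * Real.sin y ^ 6 * Real.cos y ^ 2 * Real.sin z ^ 2 * K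
      + (-1) * Real.sin x ^ 4 * Real.cos x ^ 2 * Real.sin y ^ 4 * Real.cos y ^ 2 * Real.sin z ^ 2 * K)
      * (Real.sin_sq_add_cos_sq x)
    + ((-1) * Real.sin x ^ 4 * Real.sin y ^ 4 * Real.cos y ^ 2 * Real.sin z ^ 2 * K
      + (1) * Real.sin x ^ 6 * Real.sin y ^ 2 * Real.cos y ^ 4 * Real.sin z ^ 2 * K
      + (1) * Real.sin x ^ 6 * Real.sin y ^ 4 * Real.cos y ^ 2 * Real.sin z ^ 2 * K)
      * (Real.sin_sq_add_cos_sq y)
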